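/- Let r > 0, k ∈ ℕ, and define the spiral S_r(θ) = r·(θ/2π)·(cos θ, sin θ) for θ ∈ [0, 2πk]. Then d_{r,k}(Δθ) = |S_r(2πk) − S_r(2πk − Δθ/2)| is continuous and strictly increasing in Δθ on (0, π), tends to 0 as Δθ → 0⁺, and tends to r·√(k² + (k − 1/4)²) as Δθ → π⁻. -/

import Mathlib

open Real Filter

/-- The Archimedean spiral with separation `r` between turns. -/
noncomputable def spiral (r θ : ℝ) : EuclideanSpace ℝ (Fin 2) :=
  (WithLp.equiv 2 (Fin 2 → ℝ)).symm
    ![r * (θ / (2 * π)) * Real.cos θ, r * (θ / (2 * π)) * Real.sin θ]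

/-- Auxiliary: squared distance function. -/
noncomputable def spiralF (k : ℕ) (Δ : ℝ) : ℝ :=
  (k:ℝ)^2 + ((k:ℝ) - Δ/(4*π))^2 - 2*(k:ℝ)*((k:ℝ) - Δ/(4*π)) * Real.cos (Δ/2)

lemma spiralF_eq_sq (k : ℕ) (Δ : ℝ) :
    spiralF k Δ = ((k:ℝ) - ((k:ℝ) - Δ/(4*π)) * Real.cos (Δ/2))^2 +
        (((k:ℝ) - Δ/(4*π)) * Real.sin (Δ/2))^2 := by
  unfold spiralF
  linear_combination (-(((k:ℝ) - Δ/(4*π))^2)) * Real.sin_sq_add_cos_sq (Δ/2)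

lemma spiralF_nonneg (k : ℕ) (Δ : ℝ) : 0 ≤ spiralF k Δ := by
  rw [spiralF_eq_sq]; positivity

lemma spiral_norm_eq (r : ℝ) (hr : 0 ≤ r) (k : ℕ) (Δ : ℝ) :
    ‖spiral r (2 * π * k) - spiral r (2 * π * k - Δ / 2)‖ =
      r * Real.sqrt (spiralF k Δ) := by
  have hπ : (π:ℝ) ≠ 0 := Real.pi_ne_zero
  have h3 : Real.cos (2*π*(k:ℝ)) = 1 := by
    rw [show 2*π*(k:ℝ) = (k:ℝ)*(2*π) by ring]
    exact Real.cos_nat_mul_two_pi k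
  have h4 : Real.sin (2*π*(k:ℝ)) = 0 := by
    rw [show 2*π*(k:ℝ) = (k:ℝ)*(2*π) by ring]
    simpa using Real.sin_sub_nat_mul_two_pi 0 k
  have h1 : Real.cos (2*π*(k:ℝ) - Δ/2) = Real.cos (Δ/2) := by
    rw [Real.cos_sub, h3, h4]; ring
  have h2 : Real.sin (2*π*(k:ℝ) - Δ/2) = -Real.sin (Δ/2) := by
    rw [Real.sin_sub, h3, h4]; ring
  rw [spiralF_eq_sq]
  simp only [spiral, EuclideanSpace.norm_eq, Fin.sum_univ_two, PiLp.sub_apply,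
    WithLp.equiv_symm_apply, PiLp.toLp_apply, Matrix.cons_val_zero, Matrix.cons_val_one, Matrix.head_cons,
    Real.norm_eq_abs, sq_abs, h1, h2, h3, h4]
  rw [show (r * (2 * π * (k:ℝ) / (2 * π)) * 1 - r * ((2 * π * (k:ℝ) - Δ / 2) / (2 * π)) * Real.cos (Δ / 2)) ^ 2 +
      (r * (2 * π * (k:ℝ) / (2 * π)) * 0 - r * ((2 * π * (k:ℝ) - Δ / 2) / (2 * π)) * -Real.sin (Δ / 2)) ^ 2
      = r^2 * ((((k:ℝ) - Δ/(4*π)) * Real.cos (Δ/2) - (k:ℝ))^2 + (((k:ℝ) - Δ/(4*π)) * Real.sin (Δ/2))^2) by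
      field_simp; ring]
  rw [Real.sqrt_mul (sq_nonneg r), Real.sqrt_sq hr]
  congr 2
  ring

lemma one_sub_cos_le_mul_sin (s : ℝ) (h0 : 0 ≤ s) (h1 : s ≤ π/2) :
    1 - Real.cos s ≤ s * Real.sin s := by
  have h0' : 0 ≤ s/2 := by linarith
  have h1' : s/2 ≤ π := by linarith [Real.pi_pos]
  have hsle : Real.sin (s/2) ≤ s/2 := Real.sin_le h0'
  have hsnn : 0 ≤ Real.sin (s/2) := Real.sin_nonneg_of_nonneg_of_le_pi h0' h1'
  have hc : (1:ℝ)/2 ≤ Real.cos (s/2) := by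
    have : Real.cos (π/4) ≤ Real.cos (s/2) := by
      apply Real.cos_le_cos_of_nonneg_of_le_pi h0' (by linarith [Real.pi_pos]) (by linarith)
    rw [Real.cos_pi_div_four] at this
    nlinarith [Real.sq_sqrt (by norm_num : (2:ℝ) ≥ 0), Real.sqrt_nonneg 2]
  have hcos : Real.cos s = 1 - 2 * Real.sin (s/2)^2 := by
    rw [show s = 2*(s/2) by ring, Real.cos_two_mul, Real.cos_sq']; ring
  have hsin : Real.sin s = 2 * Real.sin (s/2) * Real.cos (s/2) := by
    rw [show s = 2*(s/2) by ring, Real.sin_two_mul]; norm_num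
  rw [hcos, hsin]
  nlinarith [mul_nonneg hsnn hsnn, mul_nonneg h0 hsnn]

lemma spiralF_hasDerivAt (k : ℕ) (Δ : ℝ) :
    HasDerivAt (spiralF k)
      (((k:ℝ)*Real.cos (Δ/2) - ((k:ℝ) - Δ/(4*π)))/(2*π)
        + (k:ℝ)*((k:ℝ) - Δ/(4*π))*Real.sin (Δ/2)) Δ := by
  have hπ : (π:ℝ) ≠ 0 := Real.pi_ne_zero
  have hm : HasDerivAt (fun Δ : ℝ => (k:ℝ) - Δ/(4*π)) (-(1/(4*π))) Δ := by
    simpa using ((hasDerivAt_id Δ).div_const (4*π)).const_sub (k:ℝ)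
  have hcos : HasDerivAt (fun Δ : ℝ => Real.cos (Δ/2)) (-Real.sin (Δ/2) * (1/2)) Δ := by
    simpa [Function.comp_def] using (Real.hasDerivAt_cos (Δ/2)).comp Δ ((hasDerivAt_id Δ).div_const 2)
  have h1 : HasDerivAt (fun Δ : ℝ => ((k:ℝ) - Δ/(4*π))^2)
      (2*((k:ℝ) - Δ/(4*π))*(-(1/(4*π)))) Δ := by
    simpa using hm.fun_pow 2
  have h2 : HasDerivAt (fun Δ : ℝ => 2*(k:ℝ)*((k:ℝ) - Δ/(4*π)) * Real.cos (Δ/2))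
      (2*(k:ℝ)*(-(1/(4*π))) * Real.cos (Δ/2)
        + 2*(k:ℝ)*((k:ℝ) - Δ/(4*π)) * (-Real.sin (Δ/2) * (1/2))) Δ := by
    simpa [mul_assoc] using ((hm.const_mul (2*(k:ℝ))).fun_mul hcos)
  have h : HasDerivAt (spiralF k) _ Δ :=
    ((hasDerivAt_const Δ ((k:ℝ)^2)).fun_add h1).fun_sub h2
  convert h using 1
  field_simp
  ring

lemma spiralF_deriv_pos (k : ℕ) {Δ : ℝ} (h0 : 0 < Δ) (h1 : Δ < π) :
    0 < ((k:ℝ)*Real.cos (Δ/2) - ((k:ℝ) - Δ/(4*π)))/(2*π)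
        + (k:ℝ)*((k:ℝ) - Δ/(4*π))*Real.sin (Δ/2) := by
  have hπ : (0:ℝ) < π := Real.pi_pos
  have hs0 : 0 < Δ/2 := by linarith
  have hs1 : Δ/2 ≤ π/2 := by linarith
  have hsin : 0 < Real.sin (Δ/2) := Real.sin_pos_of_pos_of_lt_pi hs0 (by linarith)
  have hkey : 1 - Real.cos (Δ/2) ≤ (Δ/2) * Real.sin (Δ/2) :=
    one_sub_cos_le_mul_sin (Δ/2) hs0.le hs1
  have hA : -((k:ℝ) * (Δ/2) * Real.sin (Δ/2)) + Δ/(4*π)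
      ≤ (k:ℝ)*Real.cos (Δ/2) - ((k:ℝ) - Δ/(4*π)) := by
    have : 0 ≤ (k:ℝ) * (Real.cos (Δ/2) - 1 + (Δ/2) * Real.sin (Δ/2)) := by
      apply mul_nonneg (Nat.cast_nonneg k); linarith
    nlinarith
  have hdiv := div_le_div_of_nonneg_right hA (by linarith : (0:ℝ) ≤ 2*π)
  have hterm : 0 ≤ (k:ℝ) * Real.sin (Δ/2) * ((k:ℝ) - Δ/(2*π)) := by
    rcases Nat.eq_zero_or_pos k with hk | hk
    · simp [hk]
    · have hk1 : (1:ℝ) ≤ (k:ℝ) := by exact_mod_cast hk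
      have hlt : Δ/(2*π) < 1 := by rw [div_lt_one (by linarith)]; linarith
      apply mul_nonneg (mul_nonneg (Nat.cast_nonneg k) hsin.le) (by linarith)
  have hid : (-((k:ℝ) * (Δ/2) * Real.sin (Δ/2)) + Δ/(4*π))/(2*π)
        + (k:ℝ)*((k:ℝ) - Δ/(4*π))*Real.sin (Δ/2)
      = Δ/(8*π^2) + (k:ℝ)*Real.sin (Δ/2)*((k:ℝ) - Δ/(2*π)) := by
    field_simp; ring
  have hpos : 0 < Δ/(8*π^2) := by positivity
  linarith

/-- The function `Δθ ↦ |S_r(2πk) − S_r(2πk − Δθ/2)|` is continuous and strictly increasing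
on `(0, π)`, tends to `0` as `Δθ → 0⁺` and to `r √(k² + (k − 1/4)²)` as `Δθ → π⁻`. -/
theorem spiral_endpoint_distance (r : ℝ) (hr : 0 < r) (k : ℕ) :
    ContinuousOn (fun Δ : ℝ => ‖spiral r (2 * π * k) - spiral r (2 * π * k - Δ / 2)‖)
      (Set.Ioo 0 π) ∧
    StrictMonoOn (fun Δ : ℝ => ‖spiral r (2 * π * k) - spiral r (2 * π * k - Δ / 2)‖)
      (Set.Ioo 0 π) ∧
    Tendsto (fun Δ : ℝ => ‖spiral r (2 * π * k) - spiral r (2 * π * k - Δ / 2)‖)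
      (nhdsWithin 0 (Set.Ioi 0)) (nhds 0) ∧
    Tendsto (fun Δ : ℝ => ‖spiral r (2 * π * k) - spiral r (2 * π * k - Δ / 2)‖)
      (nhdsWithin π (Set.Iio π)) (nhds (r * Real.sqrt ((k : ℝ) ^ 2 + ((k : ℝ) - 1 / 4) ^ 2))) := by
  have hπ : (0:ℝ) < π := Real.pi_pos
  have hfe : (fun Δ : ℝ => ‖spiral r (2 * π * k) - spiral r (2 * π * k - Δ / 2)‖)
      = fun Δ : ℝ => r * Real.sqrt (spiralF k Δ) := by
    funext Δ; exact spiral_norm_eq r hr.le k Δ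
  rw [hfe]
  have hcF : Continuous (spiralF k) := by unfold spiralF; fun_prop
  have hcont : Continuous (fun Δ : ℝ => r * Real.sqrt (spiralF k Δ)) := by fun_prop
  have hmonoF : StrictMonoOn (spiralF k) (Set.Ioo 0 π) := by
    apply strictMonoOn_of_deriv_pos (convex_Ioo 0 π) hcF.continuousOn
    intro x hx
    rw [interior_Ioo] at hx
    rw [(spiralF_hasDerivAt k x).deriv]
    exact spiralF_deriv_pos k hx.1 hx.2
  refine ⟨hcont.continuousOn, ?_, ?_, ?_⟩
  · intro a ha b hb hab
    exact mul_lt_mul_of_pos_left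
      (Real.sqrt_lt_sqrt (spiralF_nonneg k a) (hmonoF ha hb hab)) hr
  · have h0 : spiralF k 0 = 0 := by simp [spiralF]; ring
    have := (hcont.tendsto 0).mono_left (nhdsWithin_le_nhds (s := Set.Ioi (0:ℝ)))
    simpa [h0] using this
  · have hπv : spiralF k π = (k:ℝ)^2 + ((k:ℝ) - 1/4)^2 := by
      have h14 : π/(4*π) = 1/4 := by
        rw [div_eq_div_iff (by linarith) (by norm_num)]; ring
      simp [spiralF, h14, Real.cos_pi_div_two]
    have := (hcont.tendsto π).mono_left (nhdsWithin_le_nhds (s := Set.Iio π))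
    simpa [hπv] using this
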